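/- Let T be a finite lattice and F ⊆ T. The following are equivalent: (1) F with the induced order is a confluence whose local join operation coincides with the join of T; (2) for every t ∈ F, the set F^t = {q ∈ F | q ≥ t} is closed under the join of T and contains a greatest element below every x ∈ T with x ≥ t (i.e., F^t is the range of an interior operator p_t on T^t given by p_t(x) = ⋁{q ∈ F | t ≤ q ≤ x}); (3) for all x, y, t ∈ F with x ≥ t and y ≥ t, the join x ∨ y (computed in T) belongs to F. -/

import Mathlib

/-- A finite nonempty set closed under joins has a greatest element. -/
lemma exists_isGreatest_of_sup_closed {T : Type*} [SemilatticeSup T] [Finite T]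
    {S : Set T} (hne : S.Nonempty) (hcl : ∀ a ∈ S, ∀ b ∈ S, a ⊔ b ∈ S) :
    ∃ m, IsGreatest S m := by
  obtain ⟨m, hm, hmax⟩ : ∃ m ∈ S, ∀ a ∈ S, m ≤ a → m = a := by
    obtain ⟨m, hm, hmax⟩ := Set.Finite.exists_maximal (Set.toFinite S) hne
    exact ⟨m, hm, fun a ha h => le_antisymm h (hmax ha h)⟩
  refine ⟨m, hm, fun b hb => ?_⟩
  have h1 : m ⊔ b ∈ S := hcl m hm b hb
  have h2 : m = m ⊔ b := hmax _ h1 le_sup_left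
  calc b ≤ m ⊔ b := le_sup_right
    _ = m := h2.symm

/-- Characterizations of subconfluences of a finite lattice: `F` is a
confluence with the join of `T` as local join, iff each `F^t` is the range of
an interior operator on `T^t`, iff `F` is closed under joins of pairs having a
common lower bound in `F`. -/
theorem subconfluence_characterizations
    {T : Type*} [Lattice T] [Finite T] (F : Set T) :
    ((∀ t ∈ F, ∀ x ∈ F, ∀ y ∈ F, t ≤ x → t ≤ y →
        (∃ m, m ∈ F ∧ IsGreatest {z | z ∈ F ∧ t ≤ z ∧ z ≤ x ∧ z ≤ y} m) ∧
        x ⊔ y ∈ F ∧ IsLeast {z | z ∈ F ∧ x ≤ z ∧ y ≤ z} (x ⊔ y)) ↔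
      (∀ x ∈ F, ∀ y ∈ F, ∀ t ∈ F, t ≤ x → t ≤ y → x ⊔ y ∈ F)) ∧
    ((∀ t ∈ F, (∀ x ∈ F, ∀ y ∈ F, t ≤ x → t ≤ y → x ⊔ y ∈ F) ∧
        (∀ x : T, t ≤ x → ∃ m, IsGreatest {q | q ∈ F ∧ t ≤ q ∧ q ≤ x} m)) ↔
      (∀ x ∈ F, ∀ y ∈ F, ∀ t ∈ F, t ≤ x → t ≤ y → x ⊔ y ∈ F)) := by
  constructor
  · constructor
    · intro h x hx y hy t ht htx hty
      exact (h t ht x hx y hy htx hty).2.1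
    · intro h t ht x hx y hy htx hty
      refine ⟨?_, h x hx y hy t ht htx hty, ?_⟩
      · obtain ⟨m, hm⟩ := exists_isGreatest_of_sup_closed (S := {z | z ∈ F ∧ t ≤ z ∧ z ≤ x ∧ z ≤ y})
          ⟨t, ht, le_refl t, htx, hty⟩
          (fun a ha b hb => ⟨h a ha.1 b hb.1 t ht ha.2.1 hb.2.1, le_sup_of_le_left ha.2.1,
            sup_le ha.2.2.1 hb.2.2.1, sup_le ha.2.2.2 hb.2.2.2⟩)
        exact ⟨m, hm.1.1, hm⟩
      · exact ⟨⟨h x hx y hy t ht htx hty, le_sup_left, le_sup_right⟩,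
          fun z hz => sup_le hz.2.1 hz.2.2⟩
  · constructor
    · intro h x hx y hy t ht htx hty
      exact (h t ht).1 x hx y hy htx hty
    · intro h t ht
      refine ⟨fun x hx y hy htx hty => h x hx y hy t ht htx hty, fun x htx => ?_⟩
      exact exists_isGreatest_of_sup_closed ⟨t, ht, le_refl t, htx⟩
        (fun a ha b hb => ⟨h a ha.1 b hb.1 t ht ha.2.1 hb.2.1, le_sup_of_le_left ha.2.1,
          sup_le ha.2.2 hb.2.2⟩)
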